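/- Let U, V : ℝ × ℝ → Matrix (Fin 2) (Fin 2) ℂ be continuously differentiable and satisfy the zero-curvature equation ∂ₜU − ∂ₓV + U*V − V*U = 0 everywhere. Let F : ℝ × ℝ → Matrix (Fin 2) (Fin 2) ℂ be twice continuously differentiable with ∂ₓF(x,t) = U(x,t) * F(x,t) for all (x,t). Then the matrix function W := ∂ₜF − V*F satisfies the same x-equation: ∂ₓW(x,t) = U(x,t) * W(x,t) for all (x,t). -/

import Mathlib

open Matrix

/-- If the zero-curvature equation holds and `F` solves the `x`-equation `∂ₓF = UF`,
then `W := ∂ₜF - V·F` also solves the `x`-equation `∂ₓW = UW`. -/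
theorem dressed_jost_solves_x_equation
    (U V F Ut Vx Ft : ℝ × ℝ → Matrix (Fin 2) (Fin 2) ℂ)
    (hU : ∀ i j : Fin 2, ContDiff ℝ 1 fun p : ℝ × ℝ => U p i j)
    (hV : ∀ i j : Fin 2, ContDiff ℝ 1 fun p : ℝ × ℝ => V p i j)
    (hF : ∀ i j : Fin 2, ContDiff ℝ 2 fun p : ℝ × ℝ => F p i j)
    (hUt : ∀ (x t : ℝ) (i j : Fin 2),
      HasDerivAt (fun s => U (x, s) i j) (Ut (x, t) i j) t)
    (hVx : ∀ (x t : ℝ) (i j : Fin 2),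
      HasDerivAt (fun s => V (s, t) i j) (Vx (x, t) i j) x)
    (hzc : ∀ p : ℝ × ℝ, Ut p - Vx p + (U p * V p - V p * U p) = 0)
    (hFx : ∀ (x t : ℝ) (i j : Fin 2),
      HasDerivAt (fun s => F (s, t) i j) ((U (x, t) * F (x, t)) i j) x)
    (hFt : ∀ (x t : ℝ) (i j : Fin 2),
      HasDerivAt (fun s => F (x, s) i j) (Ft (x, t) i j) t)
    (W : ℝ × ℝ → Matrix (Fin 2) (Fin 2) ℂ)
    (hW : ∀ p : ℝ × ℝ, W p = Ft p - V p * F p) :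
    ∀ (x t : ℝ) (i j : Fin 2),
      HasDerivAt (fun s => W (s, t) i j) ((U (x, t) * W (x, t)) i j) x := by
  intro x t i j
  set p : ℝ × ℝ := (x, t) with hp
  -- entrywise function
  -- derivative lines
  have lineX : ∀ (a b : ℝ), HasDerivAt (fun s : ℝ => ((s, b) : ℝ × ℝ)) (1, 0) a :=
    fun a b => (hasDerivAt_id a).prodMk (hasDerivAt_const a b)
  have lineT : ∀ (a b : ℝ), HasDerivAt (fun s : ℝ => ((a, s) : ℝ × ℝ)) (0, 1) b :=
    fun a b => (hasDerivAt_const b a).prodMk (hasDerivAt_id b)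
  -- Ft entry has x-derivative (Ut*F + U*Ft) i j, via symmetry of second derivatives
  have keyFt : ∀ (k l : Fin 2),
      HasDerivAt (fun s => Ft (s, t) k l) ((Ut p * F p + U p * Ft p) k l) x := by
    intro k l
    set f : ℝ × ℝ → ℂ := fun q => F q k l with hf
    have hf2 : ContDiff ℝ 2 f := hF k l
    have hdf : ∀ q, HasFDerivAt f (fderiv ℝ f q) q := fun q =>
      (hf2.differentiable (by norm_num) q).hasFDerivAt
    have hf' : ContDiff ℝ 1 (fderiv ℝ f) := hf2.fderiv_right (le_refl 2)
    have hdf' : ∀ q, HasFDerivAt (fderiv ℝ f) (fderiv ℝ (fderiv ℝ f) q) q := fun q =>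
      (hf'.differentiable one_ne_zero q).hasFDerivAt
    -- directional derivatives
    have dX : ∀ q : ℝ × ℝ, fderiv ℝ f q (1, 0) = (U q * F q) k l := by
      intro q
      have h1 : HasDerivAt (fun s => f (s, q.2)) (fderiv ℝ f q ((1 : ℝ), (0 : ℝ))) q.1 := by
        have := (hdf q).comp_hasDerivAt (f := fun s : ℝ => ((s, q.2) : ℝ × ℝ))
          (f' := ((1 : ℝ), (0 : ℝ))) (x := q.1) ?_
        · exact this
        · simpa using lineX q.1 q.2
      exact (h1.unique (hFx q.1 q.2 k l)).symm ▸ rfl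
    have dT : ∀ q : ℝ × ℝ, fderiv ℝ f q (0, 1) = Ft q k l := by
      intro q
      have h1 : HasDerivAt (fun s => f (q.1, s)) (fderiv ℝ f q ((0 : ℝ), (1 : ℝ))) q.2 := by
        have := (hdf q).comp_hasDerivAt (f := fun s : ℝ => ((q.1, s) : ℝ × ℝ))
          (f' := ((0 : ℝ), (1 : ℝ))) (x := q.2) ?_
        · exact this
        · simpa using lineT q.1 q.2
      exact h1.unique (hFt q.1 q.2 k l)
    -- x-derivative of Ft entry
    have hDx : HasDerivAt (fun s => fderiv ℝ f (s, t) (0, 1))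
        ((fderiv ℝ (fderiv ℝ f) p ((1 : ℝ), (0 : ℝ))) (0, 1)) x := by
      have h1 : HasDerivAt (fun s => fderiv ℝ f (s, t))
          (fderiv ℝ (fderiv ℝ f) p ((1 : ℝ), (0 : ℝ))) x := by
        have := (hdf' p).comp_hasDerivAt (f := fun s : ℝ => ((s, t) : ℝ × ℝ))
          (f' := ((1 : ℝ), (0 : ℝ))) (x := x) (lineX x t)
        exact this
      simpa using h1.clm_apply (hasDerivAt_const x ((0 : ℝ), (1 : ℝ)))
    -- t-derivative of (U F) entry
    have hDt : HasDerivAt (fun s => fderiv ℝ f (x, s) (1, 0))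
        ((fderiv ℝ (fderiv ℝ f) p ((0 : ℝ), (1 : ℝ))) (1, 0)) t := by
      have h1 : HasDerivAt (fun s => fderiv ℝ f (x, s))
          (fderiv ℝ (fderiv ℝ f) p ((0 : ℝ), (1 : ℝ))) t := by
        have := (hdf' p).comp_hasDerivAt (f := fun s : ℝ => ((x, s) : ℝ × ℝ))
          (f' := ((0 : ℝ), (1 : ℝ))) (x := t) (lineT x t)
        exact this
      simpa using h1.clm_apply (hasDerivAt_const t ((1 : ℝ), (0 : ℝ)))
    have hUF : HasDerivAt (fun s => (U (x, s) * F (x, s)) k l)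
        ((Ut p * F p + U p * Ft p) k l) t := by
      have : HasDerivAt (fun s => ∑ m : Fin 2, U (x, s) k m * F (x, s) m l)
          (∑ m : Fin 2, (Ut p k m * F p m l + U p k m * Ft p m l)) t := by
        apply HasDerivAt.fun_sum
        intro m _
        exact (hUt x t k m).mul (hFt x t m l)
      simpa [Matrix.mul_apply, Matrix.add_apply, Finset.sum_add_distrib, hp] using this
    have hDt' : HasDerivAt (fun s => (U (x, s) * F (x, s)) k l)
        ((fderiv ℝ (fderiv ℝ f) p ((0 : ℝ), (1 : ℝ))) (1, 0)) t := by
      have : (fun s => (U (x, s) * F (x, s)) k l) = fun s => fderiv ℝ f (x, s) (1, 0) := by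
        funext s; rw [dX (x, s)]
      rw [this]; exact hDt
    have heq : (fderiv ℝ (fderiv ℝ f) p ((0 : ℝ), (1 : ℝ))) (1, 0)
        = (Ut p * F p + U p * Ft p) k l := hDt'.unique hUF
    have hsymm := second_derivative_symmetric hdf (hdf' p)
      ((1 : ℝ), (0 : ℝ)) ((0 : ℝ), (1 : ℝ))
    have hFtfun : (fun s => Ft (s, t) k l) = fun s => fderiv ℝ f (s, t) (0, 1) := by
      funext s; rw [dT (s, t)]
    rw [hFtfun]
    rw [hsymm, heq] at hDx
    exact hDx
  -- derivative of (V F) entry in x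
  have hVF : HasDerivAt (fun s => (V (s, t) * F (s, t)) i j)
      ((Vx p * F p + V p * (U p * F p)) i j) x := by
    have : HasDerivAt (fun s => ∑ m : Fin 2, V (s, t) i m * F (s, t) m j)
        (∑ m : Fin 2, (Vx p i m * F p m j + V p i m * (U p * F p) m j)) x := by
      apply HasDerivAt.fun_sum
      intro m _
      exact (hVx x t i m).mul (hFx x t m j)
    simpa [Matrix.mul_apply, Matrix.add_apply, Finset.sum_add_distrib, hp] using this
  -- assemble
  have hWfun : (fun s => W (s, t) i j)
      = fun s => Ft (s, t) i j - (V (s, t) * F (s, t)) i j := by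
    funext s; rw [hW (s, t)]; simp [Matrix.sub_apply]
  have hmain : HasDerivAt (fun s => W (s, t) i j)
      ((Ut p * F p + U p * Ft p) i j - (Vx p * F p + V p * (U p * F p)) i j) x := by
    rw [hWfun]; exact (keyFt i j).sub hVF
  have hzero : Ut p * F p - Vx p * F p + (U p * (V p * F p) - V p * (U p * F p)) = 0 := by
    have h := congrArg (· * F p) (hzc p)
    simpa [add_mul, sub_mul, mul_assoc] using h
  have key : Ut p * F p + U p * Ft p - (Vx p * F p + V p * (U p * F p)) = U p * W p := by
    rw [hW p, mul_sub]
    have := hzero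
    rw [← sub_eq_zero]
    rw [← this]
    abel
  have : (Ut p * F p + U p * Ft p) i j - (Vx p * F p + V p * (U p * F p)) i j
      = (U p * W p) i j := by
    rw [← Matrix.sub_apply, key]
  rw [this] at hmain
  exact hmain
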